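/- With notation as above, for a p-torsion A-module M and multiplicative character χ of (A/p)^×, if the subspace G(M,χ) = {g ∈ F_p⊗M : (1⊗a)g = (χ(a)⊗1)g ∀a ∈ A} is nonzero, then the lift χ : A → F_p (extended by 0 on p) is a homomorphism of F-algebras. -/

import Mathlib

open TensorProduct

section GaussSetup

variable (F : Type*) [Field F] [Fintype F]
variable {A : Type*} [CommRing A] [Algebra F A]
variable (p : Ideal A) [p.IsMaximal] [Fintype (A ⧸ p)] [DecidableEq (A ⧸ p)]
variable (M : Type*) [AddCommGroup M] [Module A M] [Module (A ⧸ p) M] [Module F M]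
variable [IsScalarTower F A M] [IsScalarTower F (A ⧸ p) M]

/-- The lift of a multiplicative character `χ : (A/p)^× → F_p^×` to `F_p = A/p`,
extended by `0` on non-units. -/
noncomputable def chiLift (χ : (A ⧸ p)ˣ →* (A ⧸ p)ˣ) : (A ⧸ p) → (A ⧸ p) :=
  fun x => if h : IsUnit x then ((χ h.unit : (A ⧸ p)ˣ) : A ⧸ p) else 0

/-- The action of `1 ⊗ a`, `a ∈ A`, on `F_p ⊗_F M`. -/
noncomputable def rightA (a : A) :
    ((A ⧸ p) ⊗[F] M) →ₗ[F] ((A ⧸ p) ⊗[F] M) :=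
  LinearMap.lTensor (A ⧸ p) ((LinearMap.lsmul A M a).restrictScalars F)

/-- The space of Gauss–Thakur sums
`G(M,χ) = {g ∈ F_p ⊗ M | (1⊗a)g = (χ(a)⊗1)g for all a ∈ A}`. -/
noncomputable def GaussSpace (χ : (A ⧸ p)ˣ →* (A ⧸ p)ˣ) : Set ((A ⧸ p) ⊗[F] M) :=
  {g | ∀ a : A, rightA F p M a g = chiLift p χ (Ideal.Quotient.mk p a) • g}

lemma rightA_smul' (a : A) (c : A ⧸ p) (g : (A ⧸ p) ⊗[F] M) :
    rightA F p M a (c • g) = c • rightA F p M a g := by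
  induction g using TensorProduct.induction_on with
  | zero => simp
  | tmul x m => simp [rightA, TensorProduct.smul_tmul']
  | add x y hx hy => simp only [smul_add, map_add, hx, hy]

lemma rightA_mul' (a b : A) (g : (A ⧸ p) ⊗[F] M) :
    rightA F p M (a * b) g = rightA F p M a (rightA F p M b g) := by
  induction g using TensorProduct.induction_on with
  | zero => simp
  | tmul x m =>
      simp only [rightA, LinearMap.lTensor_tmul, LinearMap.coe_restrictScalars,
        LinearMap.lsmul_apply, mul_smul]
  | add x y hx hy => simp only [map_add, hx, hy]

lemma rightA_add' (a b : A) (g : (A ⧸ p) ⊗[F] M) :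
    rightA F p M (a + b) g = rightA F p M a g + rightA F p M b g := by
  induction g using TensorProduct.induction_on with
  | zero => simp
  | tmul x m => simp [rightA, add_smul, TensorProduct.tmul_add]
  | add x y hx hy =>
      simp only [map_add, hx, hy]
      abel

lemma rightA_fsmul' (α : F) (a : A) (g : (A ⧸ p) ⊗[F] M) :
    rightA F p M (α • a) g = α • rightA F p M a g := by
  induction g using TensorProduct.induction_on with
  | zero => simp
  | tmul x m =>
      simp only [rightA, LinearMap.lTensor_tmul, LinearMap.coe_restrictScalars,
        LinearMap.lsmul_apply, smul_assoc]
      rw [TensorProduct.tmul_smul]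
  | add x y hx hy => simp only [map_add, hx, hy, smul_add]

/-- if `G(M,χ)` is nonzero for a `p`-torsion `A`-module `M`, then the lift
`χ : A → F_p` of the multiplicative character (extended by `0` on `p`) is a homomorphism of
`F`-algebras. -/
theorem stmt11 (χ : (A ⧸ p)ˣ →* (A ⧸ p)ˣ)
    (hcompat : ∀ (a : A) (m : M), (Ideal.Quotient.mk p a) • m = a • m)
    (hne : ∃ g : (A ⧸ p) ⊗[F] M, g ∈ GaussSpace F p M χ ∧ g ≠ 0) :
    (chiLift p χ (Ideal.Quotient.mk p 1) = 1) ∧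
    (∀ a b : A, chiLift p χ (Ideal.Quotient.mk p (a * b)) =
      chiLift p χ (Ideal.Quotient.mk p a) * chiLift p χ (Ideal.Quotient.mk p b)) ∧
    (∀ a b : A, chiLift p χ (Ideal.Quotient.mk p (a + b)) =
      chiLift p χ (Ideal.Quotient.mk p a) + chiLift p χ (Ideal.Quotient.mk p b)) ∧
    (∀ (α : F) (a : A), chiLift p χ (Ideal.Quotient.mk p (α • a)) =
      α • chiLift p χ (Ideal.Quotient.mk p a)) := by

  classical
  obtain ⟨g, hg, hg0⟩ := hne
  letI : Field (A ⧸ p) := Ideal.Quotient.field p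
  have cancel : ∀ c d : A ⧸ p, c • g = d • g → c = d := by
    intro c d h
    have h0 : (c - d) • g = 0 := by rw [← sub_eq_zero] at h; exact (sub_smul c d g).trans h
    rcases smul_eq_zero.mp h0 with h1 | h1
    · exact sub_eq_zero.mp h1
    · exact absurd h1 hg0
  refine ⟨?_, ?_, ?_, ?_⟩
  · rw [map_one]
    have hu : IsUnit (1 : A ⧸ p) := isUnit_one
    rw [chiLift, dif_pos hu]
    have : hu.unit = 1 := Units.ext hu.unit_spec
    rw [this, map_one, Units.val_one]
  · intro a b
    apply cancel
    rw [← hg (a * b), rightA_mul', hg b, rightA_smul', hg a, smul_smul, mul_comm]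
  · intro a b
    apply cancel
    rw [← hg (a + b), rightA_add', hg a, hg b, add_smul]
  · intro α a
    apply cancel
    rw [← hg (α • a), rightA_fsmul', hg a, smul_assoc]


end GaussSetup
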